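/- arXiv:0711.1592 — 6 statements merged into one kernel-verified Lean document; each statement's English description precedes it below -/
import Mathlib

section
/- If A is an associative algebra with a linear operator B satisfying μ·B(fg) + B(f)B(g) = B(B(f)g + fB(g)) for a scalar μ, then the new product f * g := B(f)g + fB(g) − μfg is associative. -/
theorem rota_baxter_double_product_assoc
    {R A : Type*} [CommRing R] [Ring A] [Algebra R A]
    (μ : R) (B : A →ₗ[R] A)
    (hB : ∀ f g : A, μ • B (f * g) + B f * B g = B (B f * g + f * B g)) :
    ∀ f g h : A,
      (B (B f * g + f * B g - μ • (f * g)) * h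
        + (B f * g + f * B g - μ • (f * g)) * B h
        - μ • ((B f * g + f * B g - μ • (f * g)) * h))
      =
      (B f * (B g * h + g * B h - μ • (g * h))
        + f * B (B g * h + g * B h - μ • (g * h))
        - μ • (f * (B g * h + g * B h - μ • (g * h)))) := by
  intro f g h
  simp only [map_sub, map_smul, ← hB]
  simp only [smul_sub, smul_add, mul_smul_comm, smul_mul_assoc, sub_mul, mul_sub,
    add_mul, mul_add, smul_smul, mul_assoc, mul_comm μ μ]
  abel
end

section
/- Euler–Maclaurin formula for polynomials: for every polynomial f ∈ ℝ[x] and every n ∈ ℕ, f(1) + f(2) + ... + f(n) = ∫₀ⁿ f(t) dt + (1/2)(f(n) − f(0)) + ∑_{p≥1} (b_{2p}/(2p)!)·(f^{(2p−1)}(n) − f^{(2p−1)}(0)), where the sum is finite since f is a polynomial. -/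
open Polynomial Finset

private lemma iter_deriv_add (k : ℕ) (p q : Polynomial ℝ) :
    Polynomial.derivative^[k] (p + q)
      = Polynomial.derivative^[k] p + Polynomial.derivative^[k] q := by
  induction k with
  | zero => rfl
  | succ k ih => simp [Function.iterate_succ_apply', ih]

private lemma em_summable (f : Polynomial ℝ) (x : ℝ) :
    Summable (fun p : ℕ =>
      (((bernoulli (2 * (p + 1)) : ℚ) : ℝ) / (Nat.factorial (2 * (p + 1)) : ℝ))
        * ((Polynomial.derivative^[2 * (p + 1) - 1] f).eval x
           - (Polynomial.derivative^[2 * (p + 1) - 1] f).eval 0)) := by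
  apply summable_of_ne_finset_zero (s := Finset.range (f.natDegree + 1))
  intro p hp
  rw [Finset.mem_range, not_lt] at hp
  rw [Polynomial.iterate_derivative_eq_zero (x := 2 * (p + 1) - 1) (by omega)]
  simp

private lemma em_core (m n : ℕ) :
    ∑ i ∈ Finset.Icc 1 n, ((i : ℝ)) ^ m
      = (n : ℝ) ^ (m + 1) / (m + 1) + (1 / 2) * ((n : ℝ) ^ m - (0 : ℝ) ^ m)
        + ∑ p ∈ Finset.range (m + 1),
            (((bernoulli (2 * (p + 1)) : ℚ) : ℝ) / (Nat.factorial (2 * (p + 1)) : ℝ))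
              * ((m.descFactorial (2 * (p + 1) - 1) : ℝ)
                  * ((n : ℝ) ^ (m - (2 * (p + 1) - 1)) - (0 : ℝ) ^ (m - (2 * (p + 1) - 1)))) := by
  rcases Nat.eq_zero_or_pos m with hm | hm
  · subst hm
    have hz : ∀ p ∈ Finset.range (0 + 1),
        (((bernoulli (2 * (p + 1)) : ℚ) : ℝ) / (Nat.factorial (2 * (p + 1)) : ℝ))
          * ((Nat.descFactorial 0 (2 * (p + 1) - 1) : ℝ)
              * ((n : ℝ) ^ (0 - (2 * (p + 1) - 1)) - (0 : ℝ) ^ (0 - (2 * (p + 1) - 1)))) = 0 := by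
      intro p _
      rw [Nat.descFactorial_of_lt (by omega)]
      simp
    rw [Finset.sum_eq_zero hz]
    simp [Nat.card_Icc]
  · have hm0 : m ≠ 0 := by omega
    -- left side
    have hL : ∑ i ∈ Finset.Icc 1 n, ((i : ℝ)) ^ m
        = (∑ k ∈ Finset.range n, ((k : ℝ)) ^ m) + (n : ℝ) ^ m := by
      have hIcc : Finset.Icc 1 n = Finset.Ico 1 (n + 1) := by
        rw [Finset.Ico_add_one_right_eq_Icc]
      rw [hIcc, Finset.sum_Ico_eq_sum_range]
      simp only [Nat.add_sub_cancel]
      have h1 := Finset.sum_range_succ' (fun k : ℕ => ((k : ℝ)) ^ m) n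
      have h2 := Finset.sum_range_succ (fun k : ℕ => ((k : ℝ)) ^ m) n
      have h0 : ((0 : ℕ) : ℝ) ^ m = 0 := by simp [zero_pow hm0]
      simp only [h0, add_zero] at h1
      have : ∑ i ∈ Finset.range n, ((1 + i : ℕ) : ℝ) ^ m
          = ∑ i ∈ Finset.range n, (((i + 1 : ℕ)) : ℝ) ^ m := by
        apply Finset.sum_congr rfl
        intro i _
        rw [add_comm]
      rw [this, ← h1, h2]
    -- Faulhaber
    have hF := congrArg (fun q : ℚ => (q : ℝ)) (sum_range_pow n m)
    push_cast at hF
    rw [hL, hF]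
    -- split the Faulhaber sum
    have hsplit : Finset.range (m + 1) = insert 0 (insert 1 (Finset.Ico 2 (m + 1))) := by
      ext x
      simp only [Finset.mem_range, Finset.mem_insert, Finset.mem_Ico]
      omega
    have hc0 : ((bernoulli 0 : ℚ) : ℝ) * ((m + 1).choose 0 : ℝ) * (n : ℝ) ^ (m + 1 - 0) / ((m : ℝ) + 1)
        = (n : ℝ) ^ (m + 1) / ((m : ℝ) + 1) := by
      simp
    have hmne : ((m : ℝ) + 1) ≠ 0 := by positivity
    have hc1 : ((bernoulli 1 : ℚ) : ℝ) * ((m + 1).choose 1 : ℝ) * (n : ℝ) ^ (m + 1 - 1) / ((m : ℝ) + 1)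
        = -((n : ℝ) ^ m / 2) := by
      rw [_root_.bernoulli_one, Nat.choose_one_right, Nat.add_sub_cancel]
      push_cast
      field_simp
    have hmain : ∑ i ∈ Finset.Ico 2 (m + 1),
          ((bernoulli i : ℚ) : ℝ) * ((m + 1).choose i : ℝ) * (n : ℝ) ^ (m + 1 - i) / ((m : ℝ) + 1)
        = ∑ p ∈ Finset.range (m + 1),
            (((bernoulli (2 * (p + 1)) : ℚ) : ℝ) / (Nat.factorial (2 * (p + 1)) : ℝ))
              * ((m.descFactorial (2 * (p + 1) - 1) : ℝ)
                  * ((n : ℝ) ^ (m - (2 * (p + 1) - 1)) - (0 : ℝ) ^ (m - (2 * (p + 1) - 1)))) := by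
      -- restrict both sides to supports
      rw [← Finset.sum_filter_of_ne
          (s := Finset.Ico 2 (m + 1)) (p := fun i => Even i)
          (by
            intro i hi hne
            by_contra hodd
            rw [Finset.mem_Ico] at hi
            have h1 : _root_.bernoulli i = bernoulli' i :=
              bernoulli_eq_bernoulli'_of_ne_one (by omega)
            have h2 : bernoulli' i = 0 :=
              bernoulli'_eq_zero_of_odd (Nat.odd_iff.mpr (by
                rw [Nat.even_iff] at hodd; omega)) (by omega)
            apply hne
            rw [h1, h2]
            simp),
        ← Finset.sum_filter_of_ne
          (s := Finset.range (m + 1)) (p := fun p => 2 * p + 2 ≤ m)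
          (by
            intro p hp hne
            by_contra hle
            push_neg at hle
            apply hne
            rcases lt_or_ge m (2 * (p + 1) - 1) with h | h
            · rw [Nat.descFactorial_of_lt h]
              simp
            · have hm2 : m = 2 * p + 1 := by omega
              have : m - (2 * (p + 1) - 1) = 0 := by omega
              rw [this]
              simp)]
      refine (Finset.sum_nbij' (i := fun p => 2 * p + 2) (j := fun i => i / 2 - 1)
        ?_ ?_ ?_ ?_ ?_).symm
      · intro p hp
        simp only [Finset.mem_filter, Finset.mem_range, Finset.mem_Ico] at hp ⊢
        refine ⟨⟨by omega, by omega⟩, by exact ⟨p + 1, by omega⟩⟩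
      · intro i hi
        simp only [Finset.mem_filter, Finset.mem_Ico, Finset.mem_range, Nat.even_iff] at hi ⊢
        omega
      · intro p hp
        omega
      · intro i hi
        simp only [Finset.mem_filter, Finset.mem_Ico, Nat.even_iff] at hi
        omega
      · intro p hp
        simp only [Finset.mem_filter, Finset.mem_range] at hp
        obtain ⟨-, hpm⟩ := hp
        have hk1 : 2 * (p + 1) - 1 = 2 * p + 1 := by omega
        have hk2 : 2 * (p + 1) = 2 * p + 2 := by omega
        rw [hk1, hk2]
        have he0 : (0 : ℝ) ^ (m - (2 * p + 1)) = 0 := by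
          rw [zero_pow]
          omega
        rw [he0, sub_zero]
        have he1' : m - (2 * p + 1) = m + 1 - (2 * p + 2) := by omega
        rw [he1']
        -- factorial identity
        have h1 : (m + 1).choose (2 * p + 2) * Nat.factorial (2 * p + 2) * Nat.factorial (m + 1 - (2 * p + 2)) = Nat.factorial (m + 1) :=
          Nat.choose_mul_factorial_mul_factorial (by omega)
        have h2 : Nat.factorial (m - (2 * p + 1)) * m.descFactorial (2 * p + 1) = Nat.factorial m :=
          Nat.factorial_mul_descFactorial (by omega)
        have hsub : m + 1 - (2 * p + 2) = m - (2 * p + 1) := by omega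
        rw [hsub] at h1
        have h3 : Nat.factorial (m + 1) = (m + 1) * Nat.factorial m := Nat.factorial_succ m
        have key : (m + 1).choose (2 * p + 2) * Nat.factorial (2 * p + 2) = (m + 1) * m.descFactorial (2 * p + 1) := by
          have hfp : 0 < Nat.factorial (m - (2 * p + 1)) := Nat.factorial_pos _
          apply Nat.eq_of_mul_eq_mul_right hfp
          calc (m + 1).choose (2 * p + 2) * Nat.factorial (2 * p + 2) * Nat.factorial (m - (2 * p + 1))
              = Nat.factorial (m + 1) := h1
            _ = (m + 1) * (Nat.factorial (m - (2 * p + 1)) * m.descFactorial (2 * p + 1)) := by rw [h2, h3]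
            _ = (m + 1) * m.descFactorial (2 * p + 1) * Nat.factorial (m - (2 * p + 1)) := by ring
        have keyR : ((m + 1).choose (2 * p + 2) : ℝ) * (Nat.factorial (2 * p + 2) : ℝ)
            = ((m : ℝ) + 1) * (m.descFactorial (2 * p + 1) : ℝ) := by
          exact_mod_cast congrArg (fun x : ℕ => (x : ℝ)) key
        have hfne : (Nat.factorial (2 * p + 2) : ℝ) ≠ 0 := by
          exact_mod_cast Nat.factorial_ne_zero _
        rw [div_mul_eq_mul_div, div_eq_div_iff hfne hmne]
        linear_combination (((_root_.bernoulli (2 * p + 2) : ℚ) : ℝ)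
          * (n : ℝ) ^ (m + 1 - (2 * p + 2))) * keyR.symm
    have hsplitsum : ∑ x ∈ Finset.range (m + 1),
        ((_root_.bernoulli x : ℚ) : ℝ) * ((m + 1).choose x : ℝ) * (n : ℝ) ^ (m + 1 - x) / ((m : ℝ) + 1)
        = (n : ℝ) ^ (m + 1) / ((m : ℝ) + 1) + -((n : ℝ) ^ m / 2)
          + ∑ i ∈ Finset.Ico 2 (m + 1),
              ((_root_.bernoulli i : ℚ) : ℝ) * ((m + 1).choose i : ℝ) * (n : ℝ) ^ (m + 1 - i) / ((m : ℝ) + 1) := by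
      rw [hsplit, Finset.sum_insert (by simp), Finset.sum_insert (by simp), hc0, hc1]
      ring
    rw [hsplitsum, hmain, zero_pow hm0]
    ring

private lemma em_Xpow (m n : ℕ) :
    ∑ i ∈ Finset.Icc 1 n, (Polynomial.X ^ m : Polynomial ℝ).eval (i : ℝ)
      = (∫ t in (0:ℝ)..(n : ℝ), (Polynomial.X ^ m : Polynomial ℝ).eval t)
        + (1 / 2) * ((Polynomial.X ^ m : Polynomial ℝ).eval (n : ℝ)
            - (Polynomial.X ^ m : Polynomial ℝ).eval 0)
        + ∑' p : ℕ,
            (((bernoulli (2 * (p + 1)) : ℚ) : ℝ) / (Nat.factorial (2 * (p + 1)) : ℝ))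
              * ((Polynomial.derivative^[2 * (p + 1) - 1] (Polynomial.X ^ m : Polynomial ℝ)).eval (n : ℝ)
                 - (Polynomial.derivative^[2 * (p + 1) - 1] (Polynomial.X ^ m : Polynomial ℝ)).eval 0) := by
  rw [tsum_eq_sum (s := Finset.range (m + 1)) (by
    intro p hp
    rw [Finset.mem_range, not_lt] at hp
    rw [Polynomial.iterate_derivative_eq_zero (x := 2 * (p + 1) - 1) (by
      rw [Polynomial.natDegree_X_pow]
      omega)]
    simp)]
  simp only [Polynomial.eval_pow, Polynomial.eval_X,
    Polynomial.iterate_derivative_X_pow_eq_smul, Polynomial.eval_smul, smul_eq_mul]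
  rw [integral_pow]
  rw [em_core m n]
  have h0 : (0 : ℝ) ^ (m + 1) = 0 := by
    rw [zero_pow]
    omega
  rw [h0, sub_zero]
  congr 1
  apply Finset.sum_congr rfl
  intro p _
  ring

theorem euler_maclaurin_polynomial (f : Polynomial ℝ) (n : ℕ) :
    ∑ i ∈ Finset.Icc 1 n, f.eval (i : ℝ)
      = (∫ t in (0:ℝ)..(n : ℝ), f.eval t)
        + (1 / 2) * (f.eval (n : ℝ) - f.eval 0)
        + ∑' p : ℕ,
            (((bernoulli (2 * (p + 1)) : ℚ) : ℝ) / (Nat.factorial (2 * (p + 1)) : ℝ))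
              * ((Polynomial.derivative^[2 * (p + 1) - 1] f).eval (n : ℝ)
                 - (Polynomial.derivative^[2 * (p + 1) - 1] f).eval 0) := by
  induction f using Polynomial.induction_on' with
  | add f g hf hg =>
    have hint : ∀ h : Polynomial ℝ,
        IntervalIntegrable (fun t => h.eval t) MeasureTheory.volume 0 (n : ℝ) := fun h =>
      (Polynomial.continuous h).intervalIntegrable _ _
    simp only [Polynomial.eval_add, iter_deriv_add]
    rw [Finset.sum_add_distrib, intervalIntegral.integral_add (hint f) (hint g)]
    have htsum : (fun p : ℕ =>
        (((bernoulli (2 * (p + 1)) : ℚ) : ℝ) / (Nat.factorial (2 * (p + 1)) : ℝ))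
          * (((Polynomial.derivative^[2 * (p + 1) - 1] f).eval (n : ℝ)
              + (Polynomial.derivative^[2 * (p + 1) - 1] g).eval (n : ℝ))
             - ((Polynomial.derivative^[2 * (p + 1) - 1] f).eval 0
              + (Polynomial.derivative^[2 * (p + 1) - 1] g).eval 0)))
        = fun p : ℕ =>
          ((((bernoulli (2 * (p + 1)) : ℚ) : ℝ) / (Nat.factorial (2 * (p + 1)) : ℝ))
            * ((Polynomial.derivative^[2 * (p + 1) - 1] f).eval (n : ℝ)
               - (Polynomial.derivative^[2 * (p + 1) - 1] f).eval 0))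
          + ((((bernoulli (2 * (p + 1)) : ℚ) : ℝ) / (Nat.factorial (2 * (p + 1)) : ℝ))
            * ((Polynomial.derivative^[2 * (p + 1) - 1] g).eval (n : ℝ)
               - (Polynomial.derivative^[2 * (p + 1) - 1] g).eval 0)) := by
      funext p
      ring
    rw [htsum, Summable.tsum_add (em_summable f (n : ℝ)) (em_summable g (n : ℝ)), hf, hg]
    ring
  | monomial m a =>
    rw [← Polynomial.smul_X_eq_monomial]
    simp only [Polynomial.eval_smul, Polynomial.iterate_derivative_smul, smul_eq_mul]
    rw [← Finset.mul_sum, intervalIntegral.integral_const_mul]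
    have htsum : (fun p : ℕ =>
        (((bernoulli (2 * (p + 1)) : ℚ) : ℝ) / (Nat.factorial (2 * (p + 1)) : ℝ))
          * (a * (Polynomial.derivative^[2 * (p + 1) - 1] (Polynomial.X ^ m : Polynomial ℝ)).eval (n : ℝ)
             - a * (Polynomial.derivative^[2 * (p + 1) - 1] (Polynomial.X ^ m : Polynomial ℝ)).eval 0))
        = fun p : ℕ =>
          a * ((((bernoulli (2 * (p + 1)) : ℚ) : ℝ) / (Nat.factorial (2 * (p + 1)) : ℝ))
            * ((Polynomial.derivative^[2 * (p + 1) - 1] (Polynomial.X ^ m : Polynomial ℝ)).eval (n : ℝ)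
               - (Polynomial.derivative^[2 * (p + 1) - 1] (Polynomial.X ^ m : Polynomial ℝ)).eval 0)) := by
      funext p
      ring
    rw [htsum, tsum_mul_left, em_Xpow m n]
    ring
end

section
/- The Bernoulli numbers satisfy the quadratic recursion (2n+1) b_{2n} = − ∑_{p=1}^{n−1} binom(2n, 2p) b_{2p} b_{2n−2p} for n ≥ 2. -/
open PowerSeries Finset
open scoped Nat

private lemma dexpQ : d⁄dX ℚ (exp ℚ) = exp ℚ := by
  ext n
  rw [PowerSeries.coeff_derivative, coeff_exp, coeff_exp]
  simp only [RingHom.id_apply, Nat.factorial_succ, one_div]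
  push_cast
  field_simp

private lemma Bkey : (bernoulliPowerSeries ℚ)^2
    = bernoulliPowerSeries ℚ - X * bernoulliPowerSeries ℚ
      - X * (d⁄dX ℚ (bernoulliPowerSeries ℚ)) := by
  set B := bernoulliPowerSeries ℚ with hB
  have h := bernoulliPowerSeries_mul_exp_sub_one ℚ
  have hd : (d⁄dX ℚ) (B * (exp ℚ - 1)) = 1 := by rw [h, derivative_X]
  rw [Derivation.leibniz, map_sub, dexpQ, Derivation.map_one_eq_zero, sub_zero,
    smul_eq_mul, smul_eq_mul] at hd
  linear_combination B * hd - (d⁄dX ℚ B) * h - B * h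

private lemma bern_odd {k : ℕ} (h : k % 2 = 1) (h1 : 1 < k) : bernoulli k = 0 := by
  rw [bernoulli_eq_bernoulli'_of_ne_one (by omega)]
  exact bernoulli'_eq_zero_of_odd (Nat.odd_iff.mpr h) h1

private lemma coeffB (k : ℕ) :
    coeff k (bernoulliPowerSeries ℚ) = bernoulli k / k ! := by
  simp [bernoulliPowerSeries, coeff_mk]

theorem bernoulli_quadratic_recursion (n : ℕ) (hn : 2 ≤ n) :
    (2 * n + 1 : ℚ) * bernoulli (2 * n)
      = - ∑ p ∈ Finset.Icc 1 (n - 1),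
          (Nat.choose (2 * n) (2 * p) : ℚ) * bernoulli (2 * p) * bernoulli (2 * n - 2 * p) := by
  obtain ⟨m, rfl⟩ : ∃ m, n = m + 2 := ⟨n - 2, by omega⟩
  set f : ℕ → ℚ := fun k => bernoulli k / k ! * (bernoulli (2*m+4-k) / (2*m+4-k)!) with hf
  -- coefficient extraction
  have eqA : ∑ k ∈ range (2*m+5), f k
      = bernoulli (2*m+4) / (2*m+4)! - (2*m+4) * (bernoulli (2*m+4) / (2*m+4)!) := by
    have := congrArg (coeff (2*m+4)) Bkey
    rw [sq, coeff_mul, Finset.Nat.sum_antidiagonal_eq_sum_range_succ_mk] at this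
    rw [map_sub, map_sub] at this
    have h1 : (2*m+4 : ℕ) = (2*m+3) + 1 := by omega
    rw [h1, coeff_succ_X_mul, coeff_succ_X_mul, PowerSeries.coeff_derivative, ← h1] at this
    simp only [coeffB] at this
    rw [bern_odd (k := 2*m+3) (by omega) (by omega)] at this
    rw [show (2*m+4).succ = 2*m+5 from by omega] at this
    simp only [hf]
    rw [this]
    push_cast
    ring
  -- split the sum
  have hfe : ∀ k ∈ range (2*m+5), f k ≠ 0 → k % 2 = 0 := by
    intro k _ hk
    by_contra h
    apply hk
    rcases eq_or_lt_of_le (Nat.one_le_iff_ne_zero.mpr (by omega : k ≠ 0)) with h1 | h1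
    · rw [hf]
      have : bernoulli (2*m+4-k) = 0 := bern_odd (by omega) (by omega)
      simp [this]
    · rw [hf]
      have : bernoulli k = 0 := bern_odd (by omega) h1
      simp [this]
  have himg : (range (2*m+5)).filter (fun k => k % 2 = 0) = (range (m+3)).image (fun p => 2*p) := by
    ext k
    simp only [mem_filter, mem_range, mem_image]
    constructor
    · rintro ⟨h1, h2⟩; exact ⟨k/2, by omega, by omega⟩
    · rintro ⟨p, hp, rfl⟩; omega
  have split : ∑ k ∈ range (2*m+5), f k
      = f 0 + f (2*(m+2)) + ∑ i ∈ range (m+1), f (2*(i+1)) := by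
    rw [← sum_filter_of_ne hfe, himg, sum_image (by intro a _ b _ h; simp only at h; omega), sum_range_succ,
      sum_range_succ']
    ring
  -- rewrite goal sum
  have hIcc : Icc 1 (m+2-1) = (range (m+1)).image (fun i => i + 1) := by
    ext k; simp only [mem_Icc, mem_image, mem_range]
    constructor
    · rintro ⟨h1, h2⟩; exact ⟨k-1, by omega, by omega⟩
    · rintro ⟨i, hi, rfl⟩; omega
  rw [hIcc, sum_image (by intro a _ b _ h; simp only at h; omega)]
  -- express f (2*(i+1)) via choose
  have fterm : ∀ i ∈ range (m+1), f (2*(i+1))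
      = ((2*(m+2)).choose (2*(i+1)) : ℚ) * bernoulli (2*(i+1)) * bernoulli (2*(m+2) - 2*(i+1))
        / (2*m+4)! := by
    intro i hi
    simp only [mem_range] at hi
    have hle : 2*(i+1) ≤ 2*(m+2) := by omega
    simp only [hf]
    have h2 : (2*(m+2)).choose (2*(i+1)) * (2*(i+1))! * (2*(m+2) - 2*(i+1))! = (2*(m+2))! :=
      Nat.choose_mul_factorial_mul_factorial hle
    have e1 : 2*m+4-2*(i+1) = 2*(m+2) - 2*(i+1) := by omega
    have e2 : (2*m+4 : ℕ) = 2*(m+2) := by omega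
    rw [e1, e2]
    have hne1 : ((2*(i+1))! : ℚ) ≠ 0 := by positivity
    have hne2 : ((2*(m+2) - 2*(i+1))! : ℚ) ≠ 0 := by positivity
    field_simp
    rw [← h2]
    push_cast
    ring
  rw [sum_congr rfl fterm, ← sum_div] at split
  -- final arithmetic
  have hf0 : f 0 = bernoulli (2*m+4) / (2*m+4)! := by
    simp [hf, bernoulli_zero]
  have hftop : f (2*(m+2)) = bernoulli (2*m+4) / (2*m+4)! := by
    have : 2*(m+2) = 2*m+4 := by omega
    simp [hf, this, bernoulli_zero]
  rw [split, hf0, hftop] at eqA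
  have hfac : ((2*m+4)! : ℚ) ≠ 0 := by positivity
  simp only [show 2*(m+2) = 2*m+4 from by ring] at eqA ⊢
  push_cast at eqA ⊢
  field_simp at eqA
  linarith [eqA]
end

section
/- Multiplication formula for sine: for every positive integer n and complex z, sin(nz) = 2^{n−1} ∏_{k=0}^{n−1} sin(z + kπ/n). -/
open Complex Finset

private lemma sin_eq_aux (θ : ℂ) :
    Complex.sin θ = (Complex.exp (2 * θ * I) - 1) * Complex.exp (-(θ * I)) / (2 * I) := by
  have h1 : Complex.exp (-(θ * I)) * Complex.exp (θ * I) = 1 := by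
    rw [← Complex.exp_add]; simp
  rw [Complex.sin, show 2 * θ * I = θ * I + θ * I by ring, Complex.exp_add]
  simp only [neg_mul]
  rw [eq_div_iff (by simp [Complex.I_ne_zero] : (2 * I : ℂ) ≠ 0)]
  linear_combination (Complex.exp (-(θ * I)) - Complex.exp (θ * I)) * Complex.I_sq
    - Complex.exp (θ * I) * h1

private lemma prod_sub_aux {n : ℕ} {ζ : ℂ} (hn : 0 < n) (hζ : IsPrimitiveRoot ζ n) (x : ℂ) :
    ∏ k ∈ Finset.range n, (x - ζ ^ k) = x ^ n - 1 := by
  have h := X_pow_sub_C_eq_prod hζ hn (one_pow n)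
  have := congrArg (Polynomial.eval x) h
  simpa [Polynomial.eval_prod] using this.symm

theorem sin_multiplication_formula (n : ℕ) (hn : 0 < n) (z : ℂ) :
    Complex.sin (n * z)
      = 2 ^ (n - 1) * ∏ k ∈ Finset.range n, Complex.sin (z + k * Real.pi / n) := by
  obtain ⟨m, rfl⟩ := Nat.exists_eq_succ_of_ne_zero hn.ne'
  have hm1 : (m : ℂ) + 1 ≠ 0 := Nat.cast_add_one_ne_zero m
  have hNc : ((m + 1 : ℕ) : ℂ) = (m : ℂ) + 1 := by push_cast; ring
  set ζ : ℂ := Complex.exp (2 * Real.pi * I / ((m + 1 : ℕ) : ℂ)) with hzeta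
  have hζ : IsPrimitiveRoot ζ (m + 1) := Complex.isPrimitiveRoot_exp _ (Nat.succ_ne_zero m)
  set W : ℂ := Complex.exp (2 * z * I) with hW
  have hgauss : (∑ k ∈ Finset.range (m + 1), (k : ℂ)) = (m : ℂ) * ((m : ℂ) + 1) / 2 := by
    have h2 := Finset.sum_range_id_mul_two (m + 1)
    simp only [Nat.add_sub_cancel] at h2
    have hc := congrArg (Nat.cast (R := ℂ)) h2
    push_cast at hc
    field_simp
    linear_combination hc
  -- rewrite each factor
  have hfac : ∀ k ∈ Finset.range (m + 1),
      Complex.sin (z + k * Real.pi / ((m + 1 : ℕ) : ℂ))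
        = (W * ζ ^ k - 1) * Complex.exp (-((z + k * Real.pi / ((m + 1 : ℕ) : ℂ)) * I)) / (2 * I) := by
    intro k _
    rw [sin_eq_aux]
    congr 3
    rw [hW, hzeta, ← Complex.exp_nat_mul, ← Complex.exp_add]
    congr 1
    rw [hNc]
    field_simp
  rw [Finset.prod_congr rfl hfac]
  rw [Finset.prod_div_distrib, Finset.prod_mul_distrib, Finset.prod_const, ← Complex.exp_sum,
    Finset.card_range]
  -- sum of exponents
  have hsum : (∑ k ∈ Finset.range (m + 1), -((z + k * Real.pi / ((m + 1 : ℕ) : ℂ)) * I))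
      = -((m + 1 : ℂ) * z * I) + (m : ℂ) * (-((Real.pi : ℂ) / 2) * I) := by
    have hterm : ∀ k ∈ Finset.range (m + 1),
        -((z + k * Real.pi / ((m + 1 : ℕ) : ℂ)) * I)
          = -(z * I) + (k : ℂ) * (-((Real.pi : ℂ) / ((m : ℂ) + 1)) * I) := by
      intro k _
      rw [hNc]
      ring
    rw [Finset.sum_congr rfl hterm, Finset.sum_add_distrib, Finset.sum_const, Finset.card_range,
      ← Finset.sum_mul, hgauss, nsmul_eq_mul]
    push_cast
    field_simp
  -- the main product
  have hprod : (∏ k ∈ Finset.range (m + 1), (W * ζ ^ k - 1))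
      = (-1) ^ m * (W ^ (m + 1) - 1) := by
    have hz0 : ζ ≠ 0 := hζ.ne_zero (Nat.succ_ne_zero m)
    have h1 : ∀ k ∈ Finset.range (m + 1), W * ζ ^ k - 1 = ζ ^ k * (W - (ζ⁻¹) ^ k) := by
      intro k _
      have : (ζ⁻¹) ^ k = (ζ ^ k)⁻¹ := by rw [inv_pow]
      rw [this]
      field_simp
    rw [Finset.prod_congr rfl h1, Finset.prod_mul_distrib,
      prod_sub_aux (Nat.succ_pos m) hζ.inv, Finset.prod_pow_eq_pow_sum]
    congr 1
    -- ζ ^ (∑ k) = (-1)^m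
    have hzs : (ζ : ℂ) ^ (∑ k ∈ Finset.range (m + 1), k)
        = Complex.exp ((m : ℂ) * ((Real.pi : ℂ) * I)) := by
      rw [hzeta, ← Complex.exp_nat_mul]
      congr 1
      rw [Nat.cast_sum, hNc, hgauss]
      field_simp
    rw [hzs, Complex.exp_nat_mul, Complex.exp_pi_mul_I]
  rw [hprod, hsum, Complex.exp_add]
  have hexpI : Complex.exp ((m : ℂ) * (-((Real.pi : ℂ) / 2) * I)) = (-I) ^ m := by
    rw [Complex.exp_nat_mul]
    congr 1
    rw [show -((Real.pi : ℂ) / 2) * I = -((Real.pi : ℂ) / 2 * I) by ring, Complex.exp_neg,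
      Complex.exp_mul_I, Complex.cos_pi_div_two, Complex.sin_pi_div_two]
    simp [Complex.inv_I]
  rw [hexpI]
  -- final computation
  have hWn : W ^ (m + 1) = Complex.exp (2 * (((m : ℂ) + 1) * z) * I) := by
    rw [hW, ← Complex.exp_nat_mul]
    congr 1
    push_cast
    ring
  have hsin : Complex.sin (((m + 1 : ℕ) : ℂ) * z)
      = (Complex.exp (2 * (((m : ℂ) + 1) * z) * I) - 1)
        * Complex.exp (-(((m : ℂ) + 1) * z * I)) / (2 * I) := by
    rw [sin_eq_aux, hNc]
  rw [hsin, hWn]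
  have hIm : ((-1 : ℂ)) ^ m * (-I) ^ m = I ^ m := by
    rw [← mul_pow]; norm_num
  rw [show (m + 1 - 1 : ℕ) = m from rfl]
  have hI0 : (I : ℂ) ≠ 0 := Complex.I_ne_zero
  have hpow : (2 * I : ℂ) ^ (m + 1) = 2 ^ m * I ^ m * (2 * I) := by
    rw [mul_pow, pow_succ, pow_succ]; ring
  rw [hpow]
  have hIne : (2 : ℂ) ^ m * I ^ m ≠ 0 := mul_ne_zero (pow_ne_zero _ two_ne_zero) (pow_ne_zero _ hI0)
  have hneg1 : ((-1 : ℂ)) ^ (m * 2) = 1 := by rw [mul_comm m 2, pow_mul]; norm_num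
  field_simp
  linear_combination (Complex.exp (2 * (((m : ℂ) + 1) * z) * I) - 1)
      * Complex.exp (-(((m : ℂ) + 1) * z * I)) * (2 * I) * ((2:ℂ)^m) * hIm
    + (Complex.exp (-(((m : ℂ) + 1) * z * I))
        - Complex.exp (2 * (((m : ℂ) + 1) * z) * I) * Complex.exp (-(((m : ℂ) + 1) * z * I)))
      * I * I ^ m * 2 ^ m * 4 * hneg1
    + (-(Complex.exp (2 * ((m : ℂ) + 1) * z * I)) * I ^ m
        + 2 * I * I ^ m * 2 ^ m * Complex.exp (2 * (((m : ℂ) + 1) * z) * I)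
          * Complex.exp (-(((m : ℂ) + 1) * z * I))
        - 2 * I * I ^ m * 2 ^ m * Complex.exp (-(((m : ℂ) + 1) * z * I)) + I ^ m) * hneg1
end

section
/- Partial fraction expansion of cotangent: for z ∈ ℂ not an integer multiple of π, cot z = 1/z + ∑_{p=1}^∞ 2z/(z² − p²π²). -/
set_option maxHeartbeats 1000000

open Finset Filter Complex Topology

lemma aux_prod_sub_one_le (s : Finset ℕ) (a : ℕ → ℂ) :
    ‖(∏ i ∈ s, (1 + a i)) - 1‖ ≤ (∏ i ∈ s, (1 + ‖a i‖)) - 1 := by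
  induction s using Finset.cons_induction with
  | empty => simp
  | cons i t hi ih =>
    rw [Finset.prod_cons, Finset.prod_cons]
    have h1 : (1 + a i) * ∏ j ∈ t, (1 + a j) - 1
        = (1 + a i) * ((∏ j ∈ t, (1 + a j)) - 1) + a i := by ring
    rw [h1]
    have h2 : ‖(1 + a i) * ((∏ j ∈ t, (1 + a j)) - 1) + a i‖
        ≤ ‖(1 + a i)‖ * ‖(∏ j ∈ t, (1 + a j)) - 1‖ + ‖a i‖ := by
      refine (norm_add_le _ _).trans ?_
      rw [norm_mul]
    refine h2.trans ?_
    have h3 : ‖(1:ℂ) + a i‖ ≤ 1 + ‖a i‖ := (norm_add_le _ _).trans (by simp)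
    have h4 : (0:ℝ) ≤ ‖(∏ j ∈ t, (1 + a j)) - 1‖ := norm_nonneg _
    have h5 : (1:ℝ) ≤ ∏ j ∈ t, (1 + ‖a j‖) := by
      calc (1:ℝ) = ∏ _j ∈ t, 1 := by simp
        _ ≤ _ := Finset.prod_le_prod (fun j _ => by norm_num)
            (fun j _ => le_add_of_nonneg_right (norm_nonneg _))
    nlinarith [mul_le_mul h3 ih h4 (by positivity : (0:ℝ) ≤ 1 + ‖a i‖)]

lemma aux_prod_le_exp (s : Finset ℕ) (b : ℕ → ℝ) (hb : ∀ i, 0 ≤ b i) :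
    (∏ i ∈ s, (1 + b i)) ≤ Real.exp (∑ i ∈ s, b i) := by
  rw [Real.exp_sum]
  exact Finset.prod_le_prod (fun i _ => by have := hb i; positivity)
    (fun i _ => by simpa [add_comm] using Real.add_one_le_exp (b i))

lemma aux_unif (R : ℝ) (hR : 0 < R) :
    TendstoUniformlyOn
      (fun (n : ℕ) (w : ℂ) => (Real.pi : ℂ) * w * ∏ j ∈ range n, (1 - w ^ 2 / ((j : ℂ) + 1) ^ 2))
      (fun w => Complex.sin (Real.pi * w)) atTop (Metric.closedBall 0 R) := by
  apply UniformCauchySeqOn.tendstoUniformlyOn_of_tendsto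
    ?_ (fun w _ => Complex.tendsto_euler_sin_prod w)
  rw [Metric.uniformCauchySeqOn_iff]
  intro ε hε
  set c : ℕ → ℝ := fun j => R ^ 2 / ((j : ℝ) + 1) ^ 2 with hc
  have hc0 : ∀ j, 0 ≤ c j := fun j => by positivity
  have hsum : Summable c := by
    have h1 : Summable (fun j : ℕ => 1 / ((j : ℝ) + 1) ^ 2) := by
      have := (summable_nat_add_iff 1).mpr
        (Real.summable_one_div_nat_pow.mpr (by norm_num : 1 < 2))
      simpa using this
    simpa [hc, div_eq_mul_inv, mul_comm] using h1.mul_left (R ^ 2)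
  set C : ℝ := Real.pi * R * Real.exp (∑' j, c j) with hC
  have hCpos : 0 < C := by
    have := Real.pi_pos
    positivity
  set δ : ℝ := Real.log (1 + ε / C) with hδ
  have hδpos : 0 < δ := Real.log_pos (by nlinarith [div_pos hε hCpos])
  set S : ℕ → ℝ := fun n => ∑ j ∈ range n, c j with hS
  have hScauchy : CauchySeq S := hsum.hasSum.tendsto_sum_nat.cauchySeq
  obtain ⟨N, hN⟩ := Metric.cauchySeq_iff.mp hScauchy δ hδpos
  refine ⟨N, fun m hm n hn w hw => ?_⟩
  have key : ∀ m n : ℕ, N ≤ n → n ≤ m →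
      dist ((Real.pi : ℂ) * w * ∏ j ∈ range m, (1 - w ^ 2 / ((j : ℂ) + 1) ^ 2))
        ((Real.pi : ℂ) * w * ∏ j ∈ range n, (1 - w ^ 2 / ((j : ℂ) + 1) ^ 2)) < ε := by
    intro m n hNn hnm
    set a : ℕ → ℂ := fun j => -(w ^ 2 / ((j : ℂ) + 1) ^ 2) with ha
    have hfa : ∀ j : ℕ, (1 : ℂ) - w ^ 2 / ((j : ℂ) + 1) ^ 2 = 1 + a j := fun j => by
      rw [ha]; ring
    have hnorm_a : ∀ j, ‖a j‖ ≤ c j := by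
      intro j
      have hwR : ‖w‖ ≤ R := by simpa using Metric.mem_closedBall.mp hw
      have : ‖a j‖ = ‖w‖ ^ 2 / ((j : ℝ) + 1) ^ 2 := by
        rw [ha]
        rw [norm_neg, norm_div]
        congr 1
        · simpa using norm_pow w 2
        · rw [show ((j : ℂ) + 1) = ((( j : ℝ) + 1 : ℝ) : ℂ) by push_cast; ring]
          rw [← Complex.ofReal_pow, Complex.norm_real]
          first
          | rfl
          | exact abs_of_nonneg (by positivity)
          | exact Real.norm_of_nonneg (by positivity)
      rw [this]
      show _ ≤ R ^ 2 / ((j : ℝ) + 1) ^ 2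
      gcongr
    have hsplit : (∏ j ∈ range m, (1 - w ^ 2 / ((j : ℂ) + 1) ^ 2))
        = (∏ j ∈ range n, (1 - w ^ 2 / ((j : ℂ) + 1) ^ 2))
          * ∏ j ∈ Finset.Ico n m, (1 - w ^ 2 / ((j : ℂ) + 1) ^ 2) :=
      (Finset.prod_range_mul_prod_Ico _ hnm).symm
    rw [dist_eq_norm, hsplit]
    have hfactor : (Real.pi : ℂ) * w * ((∏ j ∈ range n, (1 - w ^ 2 / ((j : ℂ) + 1) ^ 2))
          * ∏ j ∈ Finset.Ico n m, (1 - w ^ 2 / ((j : ℂ) + 1) ^ 2))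
        - (Real.pi : ℂ) * w * ∏ j ∈ range n, (1 - w ^ 2 / ((j : ℂ) + 1) ^ 2)
        = ((Real.pi : ℂ) * w * ∏ j ∈ range n, (1 - w ^ 2 / ((j : ℂ) + 1) ^ 2))
          * ((∏ j ∈ Finset.Ico n m, (1 - w ^ 2 / ((j : ℂ) + 1) ^ 2)) - 1) := by ring
    rw [hfactor, norm_mul]
    -- bound 1
    have hb1 : ‖(Real.pi : ℂ) * w * ∏ j ∈ range n, (1 - w ^ 2 / ((j : ℂ) + 1) ^ 2)‖ ≤ C := by
      rw [norm_mul, norm_mul]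
      have h1 : ‖(Real.pi : ℂ)‖ = Real.pi := by
        rw [Complex.norm_real]; exact abs_of_nonneg Real.pi_pos.le
      have h2 : ‖w‖ ≤ R := by simpa using Metric.mem_closedBall.mp hw
      have h3 : ‖∏ j ∈ range n, (1 - w ^ 2 / ((j : ℂ) + 1) ^ 2)‖ ≤ Real.exp (∑' j, c j) := by
        calc ‖∏ j ∈ range n, (1 - w ^ 2 / ((j : ℂ) + 1) ^ 2)‖
            = ∏ j ∈ range n, ‖1 + a j‖ := by
              simp_rw [hfa]; exact norm_prod _ _
          _ ≤ ∏ j ∈ range n, (1 + c j) := by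
              apply Finset.prod_le_prod (fun j _ => norm_nonneg _)
              intro j _
              calc ‖(1 : ℂ) + a j‖ ≤ ‖(1:ℂ)‖ + ‖a j‖ := norm_add_le _ _
                _ ≤ 1 + c j := by rw [norm_one]; linarith [hnorm_a j]
          _ ≤ Real.exp (S n) := aux_prod_le_exp _ _ hc0
          _ ≤ Real.exp (∑' j, c j) := by
              apply Real.exp_le_exp.mpr
              exact Summable.sum_le_tsum _ (fun j _ => hc0 j) hsum
      calc ‖(Real.pi : ℂ)‖ * ‖w‖ * ‖∏ j ∈ range n, (1 - w ^ 2 / ((j : ℂ) + 1) ^ 2)‖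
          ≤ Real.pi * R * Real.exp (∑' j, c j) := by
            rw [h1]
            have := Real.pi_pos
            gcongr
        _ = C := rfl
    -- bound 2
    have hb2 : ‖(∏ j ∈ Finset.Ico n m, (1 - w ^ 2 / ((j : ℂ) + 1) ^ 2)) - 1‖ < ε / C := by
      have hd : S m - S n < δ := by
        have := hN m (le_trans hNn hnm) n hNn
        rw [Real.dist_eq] at this
        exact lt_of_le_of_lt (le_abs_self _) this
      have hSmn : ∑ j ∈ Finset.Ico n m, c j = S m - S n := Finset.sum_Ico_eq_sub _ hnm
      calc ‖(∏ j ∈ Finset.Ico n m, (1 - w ^ 2 / ((j : ℂ) + 1) ^ 2)) - 1‖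
          = ‖(∏ j ∈ Finset.Ico n m, (1 + a j)) - 1‖ := by simp_rw [hfa]
        _ ≤ (∏ j ∈ Finset.Ico n m, (1 + ‖a j‖)) - 1 := aux_prod_sub_one_le _ _
        _ ≤ (∏ j ∈ Finset.Ico n m, (1 + c j)) - 1 := by
            have := Finset.prod_le_prod (s := Finset.Ico n m)
              (f := fun j => 1 + ‖a j‖) (g := fun j => 1 + c j)
              (fun j _ => by positivity)
              (fun j _ => by show (1:ℝ) + ‖a j‖ ≤ 1 + c j; linarith [hnorm_a j])
            linarith
        _ ≤ Real.exp (S m - S n) - 1 := by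
            have := aux_prod_le_exp (Finset.Ico n m) c hc0
            rw [hSmn] at this
            linarith
        _ < Real.exp δ - 1 := by
            have := Real.exp_lt_exp.mpr hd
            linarith
        _ = ε / C := by
            rw [hδ, Real.exp_log (by nlinarith [div_pos hε hCpos])]
            ring
    calc ‖(Real.pi : ℂ) * w * ∏ j ∈ range n, (1 - w ^ 2 / ((j : ℂ) + 1) ^ 2)‖
          * ‖(∏ j ∈ Finset.Ico n m, (1 - w ^ 2 / ((j : ℂ) + 1) ^ 2)) - 1‖
        ≤ C * ‖(∏ j ∈ Finset.Ico n m, (1 - w ^ 2 / ((j : ℂ) + 1) ^ 2)) - 1‖ :=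
          mul_le_mul_of_nonneg_right hb1 (norm_nonneg _)
      _ < C * (ε / C) := by
          exact mul_lt_mul_of_pos_left hb2 hCpos
      _ = ε := by field_simp
  rcases le_total n m with h | h
  · exact key m n hn h
  · rw [dist_comm]; exact key n m hm h

theorem cot_partial_fractions (z : ℂ) (hz : ∀ m : ℤ, z ≠ m * Real.pi) :
    Complex.cos z / Complex.sin z
      = 1 / z + ∑' p : ℕ, 2 * z / (z ^ 2 - ((p : ℂ) + 1) ^ 2 * Real.pi ^ 2) := by
  have hπ : (Real.pi : ℂ) ≠ 0 := by
    exact_mod_cast Complex.ofReal_ne_zero.mpr Real.pi_ne_zero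
  have hz0 : z ≠ 0 := by
    intro h
    exact hz 0 (by simp [h])
  set u : ℂ := z / Real.pi with hu_def
  have hu : (Real.pi : ℂ) * u = z := by
    rw [hu_def]; field_simp
  have hu0 : u ≠ 0 := by
    rw [hu_def]
    exact div_ne_zero hz0 hπ
  clear_value u
  have hsin : Complex.sin z ≠ 0 := by
    intro h
    rw [Complex.sin_eq_zero_iff] at h
    obtain ⟨k, hk⟩ := h
    exact hz k hk
  -- each factor is nonzero at u
  have hcast : ∀ j : ℕ, ((j : ℂ) + 1) ≠ 0 := fun j => Nat.cast_add_one_ne_zero j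
  have hne : ∀ j : ℕ, (1 : ℂ) - u ^ 2 / ((j : ℂ) + 1) ^ 2 ≠ 0 := by
    intro j h
    have hd2 : ((j : ℂ) + 1) ^ 2 ≠ 0 := pow_ne_zero _ (hcast j)
    have hsq : u ^ 2 = ((j : ℂ) + 1) ^ 2 := by
      field_simp at h
      linear_combination -h
    have hfac : (u - ((j : ℂ) + 1)) * (u + ((j : ℂ) + 1)) = 0 := by
      linear_combination hsq
    rcases mul_eq_zero.mp hfac with h1 | h1
    · have : z = ((j : ℂ) + 1) * Real.pi := by
        rw [← hu]
        have : u = (j : ℂ) + 1 := by linear_combination h1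
        rw [this]; ring
      exact hz ((j : ℤ) + 1) (by push_cast at this ⊢; exact this)
    · have : z = -((j : ℂ) + 1) * Real.pi := by
        rw [← hu]
        have : u = -((j : ℂ) + 1) := by linear_combination h1
        rw [this]; ring
      exact hz (-((j : ℤ) + 1)) (by push_cast at this ⊢; exact this)
  have husq : ∀ j : ℕ, u ^ 2 - ((j : ℂ) + 1) ^ 2 ≠ 0 := by
    intro j h
    apply hne j
    have hd2 : ((j : ℂ) + 1) ^ 2 ≠ 0 := pow_ne_zero _ (hcast j)
    field_simp
    linear_combination -h
  -- locally uniform convergence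
  have hloc : TendstoLocallyUniformly
      (fun (n : ℕ) (w : ℂ) => (Real.pi : ℂ) * w * ∏ j ∈ range n, (1 - w ^ 2 / ((j : ℂ) + 1) ^ 2))
      (fun w => Complex.sin (Real.pi * w)) atTop := by
    rw [tendstoLocallyUniformly_iff_forall_isCompact]
    intro K hK
    obtain ⟨R, hR0, hKR⟩ := hK.isBounded.subset_closedBall_lt 0 0
    exact (aux_unif R hR0).mono hKR
  have hdiff : ∀ n : ℕ, Differentiable ℂ
      (fun (w : ℂ) => (Real.pi : ℂ) * w * ∏ j ∈ range n, (1 - w ^ 2 / ((j : ℂ) + 1) ^ 2)) := by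
    intro n
    apply Differentiable.mul
    · exact (differentiable_const _).mul differentiable_id
    · exact Differentiable.fun_finset_prod fun j _ =>
        (differentiable_const 1).sub ((differentiable_pow 2).div_const _)
  have htends := Complex.logDeriv_tendsto
    (f := fun (n : ℕ) (w : ℂ) => (Real.pi : ℂ) * w * ∏ j ∈ range n, (1 - w ^ 2 / ((j : ℂ) + 1) ^ 2))
    (g := fun w => Complex.sin (Real.pi * w)) isOpen_univ (x := u) trivial
    (tendstoLocallyUniformlyOn_univ.mpr hloc)
    (Eventually.of_forall fun n => (hdiff n).differentiableOn)
    (by simpa [hu] using hsin)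
  -- compute logDeriv of the limit
  have hgderiv : HasDerivAt (fun w => Complex.sin (Real.pi * w))
      (Complex.cos (Real.pi * u) * Real.pi) u := by
    have h1 : HasDerivAt (fun w : ℂ => (Real.pi : ℂ) * w) (Real.pi : ℂ) u := by
      simpa using (hasDerivAt_id u).const_mul (Real.pi : ℂ)
    exact (Complex.hasDerivAt_sin ((Real.pi : ℂ) * u)).comp u h1
  have hlog_g : logDeriv (fun w => Complex.sin (Real.pi * w)) u
      = Real.pi * Complex.cos z / Complex.sin z := by
    rw [logDeriv_apply, hgderiv.deriv, hu]
    ring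
  -- compute logDeriv of the approximants
  have hlog_f : ∀ n : ℕ, logDeriv
      (fun (w : ℂ) => (Real.pi : ℂ) * w * ∏ j ∈ range n, (1 - w ^ 2 / ((j : ℂ) + 1) ^ 2)) u
      = 1 / u + ∑ j ∈ range n, 2 * u / (u ^ 2 - ((j : ℂ) + 1) ^ 2) := by
    intro n
    rw [logDeriv_mul (f := fun w : ℂ => (Real.pi : ℂ) * w)
      (g := fun w : ℂ => ∏ j ∈ range n, (1 - w ^ 2 / ((j : ℂ) + 1) ^ 2))
      u (by exact mul_ne_zero hπ hu0)
      (Finset.prod_ne_zero_iff.mpr fun j _ => hne j)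
      ((differentiable_const _).mul differentiable_id).differentiableAt
      (Differentiable.fun_finset_prod fun j _ =>
        (differentiable_const 1).sub ((differentiable_pow 2).div_const _)).differentiableAt]
    congr 1
    · rw [logDeriv_const_mul u (Real.pi : ℂ) hπ]
      simp
    · rw [logDeriv_prod (s := range n) (f := fun j (w : ℂ) => 1 - w ^ 2 / ((j : ℂ) + 1) ^ 2) (x := u)
        (fun j _ => hne j)
        (fun j _ => ((differentiable_const 1).sub
          ((differentiable_pow 2).div_const _)).differentiableAt)]
      apply Finset.sum_congr rfl
      intro j _
      have hder : HasDerivAt (fun w : ℂ => 1 - w ^ 2 / ((j : ℂ) + 1) ^ 2)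
          (-(2 * u / ((j : ℂ) + 1) ^ 2)) u := by
        have := ((hasDerivAt_pow 2 u).div_const (((j : ℂ) + 1) ^ 2)).const_sub 1
        simpa using this
      rw [logDeriv_apply, hder.deriv]
      rw [div_eq_div_iff (hne j) (husq j)]
      have hdd := mul_inv_cancel₀ (pow_ne_zero 2 (hcast j))
      linear_combination (2 * u) * hdd
  simp_rw [hlog_f, hlog_g] at htends
  -- extract tendsto of partial sums
  have htends' : Tendsto (fun n => ∑ j ∈ range n, 2 * u / (u ^ 2 - ((j : ℂ) + 1) ^ 2)) atTop
      (𝓝 (Real.pi * Complex.cos z / Complex.sin z - 1 / u)) := by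
    have := htends.sub (tendsto_const_nhds (x := 1 / u))
    simpa using this
  -- summability
  have hsummable : Summable (fun p : ℕ => 2 * u / (u ^ 2 - ((p : ℂ) + 1) ^ 2)) := by
    have hmaj : Summable (fun p : ℕ => 4 * ‖u‖ * (1 / ((p : ℝ) + 1) ^ 2)) := by
      have h1 : Summable (fun j : ℕ => 1 / ((j : ℝ) + 1) ^ 2) := by
        have := (summable_nat_add_iff 1).mpr
          (Real.summable_one_div_nat_pow.mpr (by norm_num : 1 < 2))
        simpa using this
      exact h1.mul_left _
    apply Summable.of_norm_bounded_eventually hmaj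
    rw [Nat.cofinite_eq_atTop]
    filter_upwards [eventually_ge_atTop ⌈2 * ‖u‖ ^ 2⌉₊] with p hp
    have hp1 : (1 : ℝ) ≤ (p : ℝ) + 1 := le_add_of_nonneg_left (Nat.cast_nonneg p)
    have hbig : 2 * ‖u‖ ^ 2 ≤ ((p : ℝ) + 1) ^ 2 := by
      have h1 : (2 * ‖u‖ ^ 2 : ℝ) ≤ (⌈2 * ‖u‖ ^ 2⌉₊ : ℝ) := Nat.le_ceil _
      have h2 : ((⌈2 * ‖u‖ ^ 2⌉₊ : ℕ) : ℝ) ≤ (p : ℝ) := by exact_mod_cast hp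
      nlinarith
    have hnormpow : ‖((p : ℂ) + 1) ^ 2‖ = ((p : ℝ) + 1) ^ 2 := by
      rw [show ((p : ℂ) + 1) = (((p : ℝ) + 1 : ℝ) : ℂ) by push_cast; ring,
        ← Complex.ofReal_pow, Complex.norm_real]
      exact abs_of_nonneg (by positivity)
    have hlow : ((p : ℝ) + 1) ^ 2 / 2 ≤ ‖u ^ 2 - ((p : ℂ) + 1) ^ 2‖ := by
      have h1 : ‖((p : ℂ) + 1) ^ 2‖ - ‖u ^ 2‖ ≤ ‖((p : ℂ) + 1) ^ 2 - u ^ 2‖ :=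
        norm_sub_norm_le _ _
      rw [norm_sub_rev] at h1
      have h2 : ‖u ^ 2‖ = ‖u‖ ^ 2 := norm_pow u 2
      rw [hnormpow, h2] at h1
      linarith
    have hpos : (0 : ℝ) < ((p : ℝ) + 1) ^ 2 / 2 := by positivity
    rw [norm_div]
    have hn2u : ‖(2 : ℂ) * u‖ = 2 * ‖u‖ := by
      rw [norm_mul]; norm_num
    rw [hn2u]
    calc 2 * ‖u‖ / ‖u ^ 2 - ((p : ℂ) + 1) ^ 2‖
        ≤ 2 * ‖u‖ / (((p : ℝ) + 1) ^ 2 / 2) := by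
          apply div_le_div_of_nonneg_left (by positivity) hpos hlow
      _ = 4 * ‖u‖ * (1 / ((p : ℝ) + 1) ^ 2) := by
          field_simp
          ring
  have hhs : HasSum (fun p : ℕ => 2 * u / (u ^ 2 - ((p : ℂ) + 1) ^ 2))
      (Real.pi * Complex.cos z / Complex.sin z - 1 / u) :=
    (hsummable.hasSum_iff_tendsto_nat).mpr htends'
  have htsum := hhs.tsum_eq
  -- relate the u-series with the z-series
  have hzden : ∀ p : ℕ, z ^ 2 - ((p : ℂ) + 1) ^ 2 * (Real.pi : ℂ) ^ 2 ≠ 0 := by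
    intro p h
    rw [← hu] at h
    have h2 : (Real.pi : ℂ) ^ 2 * (u ^ 2 - ((p : ℂ) + 1) ^ 2) = 0 := by linear_combination h
    exact husq p ((mul_eq_zero.mp h2).resolve_left (pow_ne_zero 2 hπ))
  have hterm : ∀ p : ℕ, 2 * u / (u ^ 2 - ((p : ℂ) + 1) ^ 2)
      = (Real.pi : ℂ) * (2 * z / (z ^ 2 - ((p : ℂ) + 1) ^ 2 * (Real.pi : ℂ) ^ 2)) := by
    intro p
    have hd := hzden p
    rw [← hu] at hd ⊢
    rw [← mul_div_assoc, div_eq_div_iff (husq p) hd]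
    ring
  have huinv : 1 / u = (Real.pi : ℂ) / z := by
    rw [← hu]
    field_simp
  have hT : (Real.pi : ℂ) * ∑' p : ℕ, 2 * z / (z ^ 2 - ((p : ℂ) + 1) ^ 2 * (Real.pi : ℂ) ^ 2)
      = (Real.pi : ℂ) * (Complex.cos z / Complex.sin z - 1 / z) := by
    rw [← tsum_mul_left]
    rw [← tsum_congr hterm]
    rw [htsum, huinv]
    field_simp
  have hfin := mul_left_cancel₀ hπ hT
  rw [hfin]
  ring
end

section
/- Integral representation of Bernoulli numbers: for every n ≥ 1, (−1)^{n−1} b_{2n} = 4n ∫₀^∞ t^{2n−1}/(e^{2πt} − 1) dt. -/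
open MeasureTheory Set Real

lemma aux_integral (m : ℕ) (hm : 1 ≤ m) {r : ℝ} (hr : 0 < r) :
    ∫ t in Ioi (0:ℝ), t ^ (m - 1) * Real.exp (-(r * t)) = (Nat.factorial (m-1) : ℝ) / r ^ m := by
  have h := integral_rpow_mul_exp_neg_mul_Ioi (a := (m:ℝ)) (by exact_mod_cast hm.trans_lt' zero_lt_one) hr
  rw [setIntegral_congr_fun measurableSet_Ioi (fun t ht => ?_)] at h
  · rw [h]
    have hΓ : Real.Gamma (m : ℝ) = (Nat.factorial (m-1) : ℝ) := by
      rw [show (m : ℝ) = ((m - 1 : ℕ) : ℝ) + 1 by push_cast [Nat.cast_sub hm]; ring,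
        Real.Gamma_nat_eq_factorial]
    rw [hΓ, Real.rpow_natCast, div_pow, one_pow, div_mul_eq_mul_div, one_mul]
  · show t ^ ((m:ℝ) - 1) * _ = _
    rw [show (m:ℝ) - 1 = ((m - 1 : ℕ) : ℝ) by push_cast [Nat.cast_sub hm]; ring,
      Real.rpow_natCast]

lemma aux_integrable (m : ℕ) {r : ℝ} (hr : 0 < r) :
    IntegrableOn (fun t : ℝ => t ^ (m - 1) * Real.exp (-(r * t))) (Ioi 0) := by
  have h := integrableOn_rpow_mul_exp_neg_mul_rpow (s := ((m - 1 : ℕ):ℝ))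
    (by exact neg_one_lt_zero.trans_le (Nat.cast_nonneg _)) (by norm_num : (0:ℝ) < 1) hr
  refine h.congr_fun (fun t ht => ?_) measurableSet_Ioi
  beta_reduce
  rw [Real.rpow_natCast, Real.rpow_one, neg_mul]

theorem bernoulli_integral_representation (n : ℕ) (hn : 1 ≤ n) :
    (-1 : ℝ) ^ (n - 1) * ((bernoulli (2 * n) : ℚ) : ℝ)
      = 4 * n * ∫ t in Set.Ioi (0 : ℝ), t ^ (2 * n - 1) / (Real.exp (2 * Real.pi * t) - 1) := by
  have hπ : (0:ℝ) < 2 * π := by positivity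
  set F : ℕ → ℝ → ℝ := fun k t => t ^ (2*n - 1) * Real.exp (-((2*π*(k+1)) * t)) with hF
  have hr : ∀ k : ℕ, (0:ℝ) < 2*π*(k+1) := fun k => by positivity
  -- pointwise sum
  have key : ∀ t ∈ Ioi (0:ℝ), HasSum (fun k => F k t)
      (t ^ (2*n - 1) / (Real.exp (2*π*t) - 1)) := by
    intro t ht
    rw [mem_Ioi] at ht
    have he1 : Real.exp (-(2*π*t)) < 1 := Real.exp_lt_one_iff.mpr (by nlinarith)
    have he2 : (1:ℝ) < Real.exp (2*π*t) := by
      rw [Real.one_lt_exp_iff]; positivity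
    have geo := hasSum_geometric_of_lt_one (Real.exp_pos _).le he1
    have h2 := geo.mul_left (t ^ (2*n-1) * Real.exp (-(2*π*t)))
    have hexp : ∀ k : ℕ, Real.exp (-(2*π*((k:ℝ)+1) * t))
        = Real.exp (-(2*π*t)) * Real.exp (-(2*π*t)) ^ k := by
      intro k
      rw [← Real.exp_nat_mul, ← Real.exp_add]
      congr 1; ring
    have h3 : (fun k : ℕ => t ^ (2*n-1) * Real.exp (-(2*π*t)) * Real.exp (-(2*π*t)) ^ k)
        = fun k => F k t := funext fun k => by
      show _ = t ^ (2*n - 1) * Real.exp (-((2*π*((k:ℝ)+1)) * t))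
      rw [show -(2*π*((k:ℝ)+1) * t) = -(2*π*((k:ℝ)+1) * t) from rfl, hexp k]
      ring
    rw [h3] at h2
    have h4 : t ^ (2*n-1) * Real.exp (-(2*π*t)) * (1 - Real.exp (-(2*π*t)))⁻¹
        = t ^ (2*n - 1) / (Real.exp (2*π*t) - 1) := by
      have h0 : Real.exp (2*π*t) ≠ 0 := (Real.exp_pos _).ne'
      have h1 : Real.exp (2*π*t) - 1 ≠ 0 := sub_ne_zero.mpr he2.ne'
      have h5 : (Real.exp (2*π*t))⁻¹ < 1 := by
        rw [← Real.exp_neg]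
        exact Real.exp_lt_one_iff.mpr (by nlinarith)
      have hinv : (1:ℝ) - (Real.exp (2*π*t))⁻¹ ≠ 0 := ne_of_gt (by linarith)
      rw [Real.exp_neg]
      field_simp
    rw [h4] at h2
    exact h2
  -- value of each integral
  have hint : ∀ k : ℕ, ∫ t in Ioi (0:ℝ), F k t
      = (Nat.factorial (2*n-1) : ℝ) / (2*π*(k+1)) ^ (2*n) :=
    fun k => aux_integral (2*n) (by omega) (hr k)
  have hintg : ∀ k : ℕ, IntegrableOn (F k) (Ioi (0:ℝ)) := fun k => aux_integrable (2*n) (hr k)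
  -- zeta value
  have hZ := hasSum_zeta_nat (k := n) (by omega)
  have hZ' : HasSum (fun k : ℕ => 1 / ((k:ℝ)+1) ^ (2*n))
      ((-1 : ℝ) ^ (n + 1) * (2 : ℝ) ^ (2 * n - 1) * π ^ (2 * n) *
        ((bernoulli (2 * n) : ℚ) : ℝ) / (Nat.factorial (2*n) : ℝ)) := by
    have h0 : (1:ℝ) / ((0:ℕ):ℝ) ^ (2*n) = 0 := by
      simp [zero_pow (by omega : 2*n ≠ 0)]
    have := (hasSum_nat_add_iff' (f := fun j : ℕ => 1 / (j:ℝ) ^ (2*n)) 1).mpr hZ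
    simpa [zero_pow (by omega : 2*n ≠ 0), one_div] using this
  -- summability of norms of integrals
  have hnorm : ∀ k : ℕ, ∫ t in Ioi (0:ℝ), ‖F k t‖
      = (Nat.factorial (2*n-1) : ℝ) / (2*π*(k+1)) ^ (2*n) := by
    intro k
    rw [← hint k]
    refine setIntegral_congr_fun measurableSet_Ioi (fun t ht => ?_)
    rw [mem_Ioi] at ht
    rw [Real.norm_eq_abs, abs_of_nonneg (by positivity)]
  have hsum : Summable fun k : ℕ => ∫ t in Ioi (0:ℝ), ‖F k t‖ := by
    simp_rw [hnorm]
    have : Summable fun k : ℕ => 1 / ((k:ℝ)+1) ^ (2*n) := hZ'.summable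
    have h2 := this.mul_left ((Nat.factorial (2*n-1) : ℝ) / (2*π) ^ (2*n))
    refine h2.congr fun k => ?_
    rw [div_mul_div_comm, mul_one, ← mul_pow]
  -- swap integral and sum
  have swap : ∫ t in Ioi (0:ℝ), t ^ (2*n - 1) / (Real.exp (2*π*t) - 1)
      = ∑' k : ℕ, ∫ t in Ioi (0:ℝ), F k t := by
    calc ∫ t in Ioi (0:ℝ), t ^ (2*n - 1) / (Real.exp (2*π*t) - 1)
        = ∫ t in Ioi (0:ℝ), ∑' k : ℕ, F k t :=
          setIntegral_congr_fun measurableSet_Ioi (fun t ht => ((key t ht).tsum_eq).symm)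
      _ = ∑' k : ℕ, ∫ t in Ioi (0:ℝ), F k t :=
          (integral_tsum_of_summable_integral_norm hintg hsum).symm
  rw [swap]
  have : ∑' k : ℕ, ∫ t in Ioi (0:ℝ), F k t
      = ((Nat.factorial (2*n-1) : ℝ) / (2*π) ^ (2*n)) *
        ((-1 : ℝ) ^ (n + 1) * (2 : ℝ) ^ (2 * n - 1) * π ^ (2 * n) *
          ((bernoulli (2 * n) : ℚ) : ℝ) / (Nat.factorial (2*n) : ℝ)) := by
    rw [← hZ'.tsum_eq, ← tsum_mul_left]
    refine tsum_congr fun k => ?_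
    rw [hint k, div_mul_div_comm, mul_one, ← mul_pow]
  rw [this]
  -- final arithmetic
  have hsign : (-1 : ℝ) ^ (n + 1) = (-1 : ℝ) ^ (n - 1) := by
    rw [show n + 1 = (n - 1) + 2 by omega, pow_add]
    ring
  have hfac : ((Nat.factorial (2*n)) : ℝ) = ((2*n : ℕ) : ℝ) * ((Nat.factorial (2*n-1)) : ℝ) := by
    rw [← Nat.cast_mul, Nat.mul_factorial_pred (by omega)]
  have h2pow : (2:ℝ) ^ (2*n) = 2 * 2 ^ (2*n - 1) := by
    rw [← pow_succ']
    congr 1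
    omega
  rw [hsign, hfac, mul_pow, h2pow]
  have hπ0 : π ≠ 0 := Real.pi_ne_zero
  have hn0 : ((2*n : ℕ):ℝ) ≠ 0 := by positivity
  have hf0 : ((Nat.factorial (2*n-1)) : ℝ) ≠ 0 := by positivity
  field_simp
  push_cast
  ring
end
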